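/- (Correctness of quaternion SPA in the noiseless case) Let M ∈ ℍ_S^{m×n} be an r-separable quaternion matrix, M = W[I_r, U]Π with W = M(:,K), U ∈ ℝ^{r×t}₊, Π a permutation, and suppose rank(mat(M)) = r. Then the quaternion successive projection algorithm — which normalizes each column m_j by ‖S₀(m_j)‖₁, and then r times repeats: select the column of largest ℓ2 norm (in ℝ^{4m}) and project all columns onto the orthogonal complement of the selected column — identifies exactly the index set K (up to ties among duplicated pure columns), and after r steps the residual matrix is zero. -/

import Mathlib

open scoped BigOperators

open scoped RealInnerProductSpace

/-- The `l`-th real component of a quaternion. -/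
noncomputable def qcomp : Fin 4 → Quaternion ℝ → ℝ := fun l q => ![q.re, q.imI, q.imJ, q.imK] l

lemma qcomp_sum (l : Fin 4) {ι : Type*} (T : Finset ι) (f : ι → Quaternion ℝ) :
    qcomp l (∑ s ∈ T, f s) = ∑ s ∈ T, qcomp l (f s) := by
  induction T using Finset.cons_induction with
  | empty => fin_cases l <;> simp [qcomp, Quaternion.re_zero, Quaternion.imI_zero, Quaternion.imJ_zero,
      Quaternion.imK_zero]
  | cons a T ha ih => fin_cases l <;> simp_all [qcomp]

lemma qcomp_smul (l : Fin 4) (x : ℝ) (q : Quaternion ℝ) :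
    qcomp l (x • q) = x * qcomp l q := by
  fin_cases l <;> simp [qcomp, Quaternion.re_smul, Quaternion.imI_smul, Quaternion.imJ_smul,
    Quaternion.imK_smul]

/-- Linear independence of the subfamily where `Q` holds, phrased with total coefficient
functions supported on `Q`. -/
def LIon {E : Type*} [AddCommGroup E] [Module ℝ E] {ι : Type*} [Fintype ι]
    (Q : ι → Prop) (w : ι → E) : Prop :=
  ∀ c : ι → ℝ, (∀ s, ¬ Q s → c s = 0) → ∑ s, c s • w s = 0 → ∀ s, c s = 0

lemma aux_step {E : Type*} [NormedAddCommGroup E] [InnerProductSpace ℝ E]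
    {ι : Type*} [Fintype ι] [DecidableEq ι]
    (Q : ι → Prop) (v : ι → E) (hli : LIon Q v)
    (θ : ι → ℝ) (hθ0 : ∀ s, 0 ≤ θ s) (hθ1 : ∑ s, θ s = 1)
    (hvQ : ∀ s, ¬ Q s → v s = 0)
    (u : E) (hu : u = ∑ s, θ s • v s)
    (hmax : ∀ s, ‖v s‖ ≤ ‖u‖) (hune : u ≠ 0) :
    ∃ s, Q s ∧ u = v s ∧ θ s = 1 := by
  have hupos : 0 < ‖u‖ := norm_pos_iff.mpr hune
  have h1 : ‖u‖ ≤ ∑ s, θ s * ‖v s‖ := by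
    rw [hu]
    refine (norm_sum_le _ _).trans_eq ?_
    refine Finset.sum_congr rfl fun s _ => ?_
    rw [norm_smul, Real.norm_eq_abs, abs_of_nonneg (hθ0 s)]
  have h2 : ∑ s, θ s * ‖v s‖ ≤ ∑ s, θ s * ‖u‖ :=
    Finset.sum_le_sum fun s _ => mul_le_mul_of_nonneg_left (hmax s) (hθ0 s)
  have h3 : ∑ s, θ s * ‖u‖ = ‖u‖ := by rw [← Finset.sum_mul, hθ1, one_mul]
  have heq : ∑ s, θ s * ‖v s‖ = ‖u‖ := le_antisymm (h2.trans_eq h3) h1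
  have hnorm : ∀ s, 0 < θ s → ‖v s‖ = ‖u‖ := by
    intro s hs
    by_contra hne
    have hlt : θ s * ‖v s‖ < θ s * ‖u‖ :=
      mul_lt_mul_of_pos_left (lt_of_le_of_ne (hmax s) hne) hs
    have : ∑ s, θ s * ‖v s‖ < ∑ s, θ s * ‖u‖ :=
      Finset.sum_lt_sum (fun i _ => mul_le_mul_of_nonneg_left (hmax i) (hθ0 i))
        ⟨s, Finset.mem_univ s, hlt⟩
    rw [heq, h3] at this; exact lt_irrefl _ this
  have hinner : ∑ s, ∑ s', θ s * θ s' * (‖v s‖ * ‖v s'‖ - ⟪v s, v s'⟫) = 0 := by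
    have e1 : (‖u‖ : ℝ) ^ 2 = ∑ s, ∑ s', θ s * θ s' * ⟪v s, v s'⟫ := by
      rw [← real_inner_self_eq_norm_sq, hu, sum_inner]
      refine Finset.sum_congr rfl fun s _ => ?_
      rw [real_inner_smul_left, inner_sum]
      rw [Finset.mul_sum]
      refine Finset.sum_congr rfl fun s' _ => ?_
      rw [real_inner_smul_right]; ring
    have e2 : (‖u‖ : ℝ) ^ 2 = ∑ s, ∑ s', θ s * θ s' * (‖v s‖ * ‖v s'‖) := by
      conv_lhs => rw [← heq]
      rw [sq, Finset.sum_mul_sum]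
      exact Finset.sum_congr rfl fun s _ => Finset.sum_congr rfl fun s' _ => by ring
    simp only [mul_sub, Finset.sum_sub_distrib]
    rw [← e2, ← e1, sub_self]
  have hterm : ∀ s s', 0 ≤ θ s * θ s' * (‖v s‖ * ‖v s'‖ - ⟪v s, v s'⟫) := by
    intro s s'
    refine mul_nonneg (mul_nonneg (hθ0 s) (hθ0 s')) (sub_nonneg.mpr ?_)
    exact real_inner_le_norm _ _
  have hpair : ∀ s s', 0 < θ s → 0 < θ s' → s ≠ s' → False := by
    intro s1 s2 h1' h2' hne
    have hz : θ s1 * θ s2 * (‖v s1‖ * ‖v s2‖ - ⟪v s1, v s2⟫) = 0 := by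
      have hrow : ∀ s ∈ Finset.univ, (0:ℝ) ≤ ∑ s', θ s * θ s' * (‖v s‖ * ‖v s'‖ - ⟪v s, v s'⟫) :=
        fun s _ => Finset.sum_nonneg fun s' _ => hterm s s'
      have h01 : ∑ s', θ s1 * θ s' * (‖v s1‖ * ‖v s'‖ - ⟪v s1, v s'⟫) = 0 :=
        (Finset.sum_eq_zero_iff_of_nonneg hrow).mp hinner s1 (Finset.mem_univ _)
      exact (Finset.sum_eq_zero_iff_of_nonneg fun s' _ => hterm s1 s').mp h01 s2 (Finset.mem_univ _)
    have hcs : ⟪v s1, v s2⟫ = ‖v s1‖ * ‖v s2‖ := by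
      rcases mul_eq_zero.mp hz with h | h
      · rcases mul_eq_zero.mp h with h' | h' <;> [exact absurd h' h1'.ne'; exact absurd h' h2'.ne']
      · linarith [sub_eq_zero.mp h]
    have := inner_eq_norm_mul_iff_real.mp hcs
    rw [hnorm s1 h1', hnorm s2 h2'] at this
    have hv12 : v s1 = v s2 := smul_right_injective E hupos.ne' this
    have hQ1 : Q s1 := by
      by_contra h
      have : v s1 = 0 := hvQ s1 h
      rw [← hnorm s1 h1', this, norm_zero] at hupos; exact lt_irrefl _ hupos
    have hQ2 : Q s2 := by
      by_contra h
      have : v s2 = 0 := hvQ s2 h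
      rw [← hnorm s2 h2', this, norm_zero] at hupos; exact lt_irrefl _ hupos
    have := hli (fun s => if s = s1 then 1 else if s = s2 then -1 else 0)
      (fun s hs => by
        by_cases e1 : s = s1; · exact absurd (e1 ▸ hQ1) hs
        by_cases e2 : s = s2; · exact absurd (e2 ▸ hQ2) hs
        simp [e1, e2])
      (by
        rw [Finset.sum_eq_add_of_mem s1 s2 (Finset.mem_univ _) (Finset.mem_univ _) hne ?_]
        · simp [hne, Ne.symm hne, hv12]
        · intro c _ hc
          simp [hc.1, hc.2]) s1
    simp at this
  obtain ⟨s0, hs0⟩ : ∃ s, 0 < θ s := by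
    by_contra h
    push_neg at h
    have : ∑ s, θ s = 0 := Finset.sum_eq_zero fun s _ => le_antisymm (h s) (hθ0 s)
    rw [hθ1] at this; norm_num at this
  have hothers : ∀ s, s ≠ s0 → θ s = 0 := by
    intro s hs
    rcases (hθ0 s).lt_or_eq with h | h
    · exact (hpair s s0 h hs0 hs).elim
    · exact h.symm
  have hθs0 : θ s0 = 1 := by
    rw [← hθ1, Finset.sum_eq_single s0 (fun b _ hb => hothers b hb)
      (fun h => absurd (Finset.mem_univ s0) h)]
  have huv : u = v s0 := by
    rw [hu, Finset.sum_eq_single s0 (fun b _ hb => by rw [hothers b hb, zero_smul])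
      (fun h => absurd (Finset.mem_univ s0) h), hθs0, one_smul]
  have hQ0 : Q s0 := by
    by_contra h
    rw [huv, hvQ s0 h] at hune; exact hune rfl
  exact ⟨s0, hQ0, huv, hθs0⟩

lemma norm_euc_sq {κ : Type*} [Fintype κ] (x : κ → ℝ) :
    ‖(WithLp.linearEquiv 2 ℝ (κ → ℝ)).symm x‖ ^ 2 = ∑ a, x a ^ 2 := by
  rw [EuclideanSpace.norm_eq, Real.sq_sqrt (Finset.sum_nonneg fun a _ => sq_nonneg _)]
  refine Finset.sum_congr rfl fun a _ => ?_
  rw [WithLp.linearEquiv_symm_apply]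
  show ‖x a‖ ^ 2 = _
  rw [Real.norm_eq_abs, sq_abs]

lemma aux_step' {κ ι : Type*} [Fintype κ] [Fintype ι] [DecidableEq ι]
    (Q : ι → Prop) (v : ι → (κ → ℝ)) (hli : LIon Q v)
    (θ : ι → ℝ) (hθ0 : ∀ s, 0 ≤ θ s) (hθ1 : ∑ s, θ s = 1)
    (hvQ : ∀ s, ¬ Q s → v s = 0)
    (u : κ → ℝ) (hu : ∀ a, u a = ∑ s, θ s * v s a)
    (hmax : ∀ s, (∑ a, v s a ^ 2) ≤ ∑ a, u a ^ 2) (hune : u ≠ 0) :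
    ∃ s, Q s ∧ u = v s ∧ θ s = 1 := by
  set le := (WithLp.linearEquiv 2 ℝ (κ → ℝ)).symm with hle
  have hu' : u = ∑ s, θ s • v s := by
    funext a; rw [hu a, Finset.sum_apply]
    exact Finset.sum_congr rfl fun s _ => rfl
  have key := aux_step Q (fun s => le (v s))
    (by
      intro c hc hsum s
      refine hli c hc ?_ s
      have : le (∑ s, c s • v s) = 0 := by
        rw [map_sum]; simpa [map_smul] using hsum
      exact (LinearEquiv.map_eq_zero_iff _).mp this)
    θ hθ0 hθ1
    (fun s hs => by show le (v s) = 0; rw [hvQ s hs, map_zero])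
    (le u)
    (by rw [hu', map_sum]; exact Finset.sum_congr rfl fun s _ => by rw [map_smul])
    (by
      intro s
      have h1 := norm_euc_sq (v s)
      have h2 := norm_euc_sq u
      rw [← hle] at h1 h2
      refine le_of_pow_le_pow_left₀ two_ne_zero (norm_nonneg _) ?_
      rw [h1, h2]; exact hmax s)
    (by exact (LinearEquiv.map_ne_zero_iff le).mpr hune)
  obtain ⟨s, hQ, huv, hθ⟩ := key
  exact ⟨s, hQ, le.injective huv, hθ⟩

/-- correctness of quaternion SPA, noiseless case: Let
`M ∈ ℍ_S^{m×n}` be `r`-separable, `M = M(:,K)[I_r, U]Π` with nonnegative mixing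
weights and `rank(mat M) = r`.  Run quaternion SPA: normalize every column by the
ℓ1 norm of its real component, then `r` times pick a column of largest ℓ2 norm (in
`ℝ^{4m}`) and project all columns onto the orthogonal complement of the chosen one.
Then every chosen column coincides (after normalization) with a pure column, the
correspondence `s ↦ σ s` with `K` is a bijection (so `K` is identified up to ties
among duplicated pure columns), and the residual matrix after `r` steps is zero. -/
theorem stmt14 (m n r : ℕ) (M : Fin m → Fin n → Quaternion ℝ)
    (hS : ∀ i j, 0 ≤ (M i j).re ∧
      (M i j).imI ^ 2 + (M i j).imJ ^ 2 + (M i j).imK ^ 2 ≤ (M i j).re ^ 2)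
    (K : Fin r → Fin n) (hK : Function.Injective K)
    (H : Fin r → Fin n → ℝ) (hH : ∀ s j, 0 ≤ H s j)
    (hfac : ∀ i j, M i j = ∑ s, H s j • M i (K s))
    (hpure : ∀ s s' : Fin r, H s (K s') = if s = s' then 1 else 0)
    (X : Matrix (Fin 4 × Fin m) (Fin n) ℝ)
    (hX : ∀ l i j, X (l, i) j = qcomp l (M i j))
    (hrank : X.rank = r)
    -- the normalized data matrix
    (Mn : Fin n → (Fin 4 × Fin m → ℝ))
    (hMn : ∀ j p, Mn j p = qcomp p.1 (M p.2 j) / (∑ i, |(M i j).re|))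
    -- a trace of the algorithm: residual matrices `Z` and chosen indices `k`
    (Z : Fin (r + 1) → Fin n → (Fin 4 × Fin m → ℝ)) (k : Fin r → Fin n)
    (hZ0 : Z 0 = Mn)
    (hargmax : ∀ (s : Fin r) (j : Fin n),
      (∑ a, (Z s.castSucc j a) ^ 2) ≤ ∑ a, (Z s.castSucc (k s) a) ^ 2)
    (hproj : ∀ (s : Fin r) (j : Fin n) (a : Fin 4 × Fin m),
      Z s.succ j a = Z s.castSucc j a -
        ((∑ b, Z s.castSucc (k s) b * Z s.castSucc j b) /
          (∑ b, (Z s.castSucc (k s) b) ^ 2)) * Z s.castSucc (k s) a) :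
    (∃ σ : Fin r → Fin r, Function.Bijective σ ∧ ∀ s : Fin r, Mn (k s) = Mn (K (σ s))) ∧
    Z (Fin.last r) = 0 := by
  classical
  have hre : ∀ i j, |(M i j).re| = (M i j).re := fun i j => abs_of_nonneg (hS i j).1
  set Nr : Fin n → ℝ := fun j => ∑ i, |(M i j).re| with hNrdef
  set col : Fin n → (Fin 4 × Fin m → ℝ) := fun j p => qcomp p.1 (M p.2 j) with hcoldef
  have hcolfac : ∀ j p, col j p = ∑ s, H s j * col (K s) p := by
    intro j p
    show qcomp p.1 (M p.2 j) = _
    rw [hfac p.2 j, qcomp_sum]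
    exact Finset.sum_congr rfl fun s _ => qcomp_smul _ _ _
  have hq0 : ∀ (q : Quaternion ℝ), qcomp 0 q = q.re := fun q => rfl
  have hNradd : ∀ j, Nr j = ∑ s, H s j * Nr (K s) := by
    intro j
    show ∑ i, |(M i j).re| = ∑ s, H s j * ∑ i, |(M i (K s)).re|
    simp only [hre]
    calc ∑ i, (M i j).re = ∑ i, ∑ s, H s j * (M i (K s)).re := by
          refine Finset.sum_congr rfl fun i _ => ?_
          rw [← hq0, hfac i j, qcomp_sum]
          exact Finset.sum_congr rfl fun s _ => by rw [qcomp_smul, hq0]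
      _ = ∑ s, H s j * ∑ i, (M i (K s)).re := by
          rw [Finset.sum_comm]
          exact Finset.sum_congr rfl fun s _ => (Finset.mul_sum _ _ _).symm
  have hNr0 : ∀ j, 0 ≤ Nr j := fun j => Finset.sum_nonneg fun i _ => abs_nonneg _
  have hcol0 : ∀ j, Nr j = 0 → col j = 0 := by
    intro j hj
    have hre0 : ∀ i, (M i j).re = 0 := by
      intro i
      have := (Finset.sum_eq_zero_iff_of_nonneg (fun i _ => abs_nonneg ((M i j).re))).mp hj i
        (Finset.mem_univ i)
      rwa [abs_eq_zero] at this
    funext p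
    obtain ⟨l, i⟩ := p
    have h2 := (hS i j).2
    rw [hre0 i] at h2
    have hI : (M i j).imI = 0 := by
      nlinarith [sq_nonneg (M i j).imI, sq_nonneg (M i j).imJ, sq_nonneg (M i j).imK]
    have hJ : (M i j).imJ = 0 := by
      nlinarith [sq_nonneg (M i j).imI, sq_nonneg (M i j).imJ, sq_nonneg (M i j).imK]
    have hK' : (M i j).imK = 0 := by
      nlinarith [sq_nonneg (M i j).imI, sq_nonneg (M i j).imJ, sq_nonneg (M i j).imK]
    show qcomp l (M i j) = 0
    fin_cases l <;> simp [qcomp, hre0 i, hI, hJ, hK']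
  -- linear independence of the pure columns
  have hXT : ∀ j, X.transpose j = col j := by
    intro j; funext p; obtain ⟨l, i⟩ := p
    show X (l, i) j = _
    rw [hX l i j]
  have hsub : Set.range X.transpose ⊆ (Submodule.span ℝ (Set.range (X.transpose ∘ K)) : Set _) := by
    rintro _ ⟨j, rfl⟩
    have hj : X.transpose j = ∑ s, H s j • X.transpose (K s) := by
      funext p
      rw [Finset.sum_apply]
      rw [hXT, hcolfac j p]
      exact Finset.sum_congr rfl fun s _ => by rw [Pi.smul_apply, hXT, smul_eq_mul]
    rw [hj]
    exact Submodule.sum_mem _ fun s _ => Submodule.smul_mem _ _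
      (Submodule.subset_span ⟨s, rfl⟩)
  have hspan : Submodule.span ℝ (Set.range (X.transpose ∘ K)) =
      Submodule.span ℝ (Set.range X.transpose) :=
    le_antisymm (Submodule.span_mono (Set.range_comp_subset_range K X.transpose))
      (Submodule.span_le.mpr hsub)
  have hliX : LinearIndependent ℝ (X.transpose ∘ K) := by
    rw [linearIndependent_iff_card_eq_finrank_span, Fintype.card_fin]
    show r = Module.finrank ℝ (Submodule.span ℝ (Set.range (X.transpose ∘ K)))
    rw [hspan]
    have := Matrix.rank_eq_finrank_span_cols X
    rw [hrank] at this; exact this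
  have hlicol : LinearIndependent ℝ (fun s => col (K s)) := by
    have he : (fun s => col (K s)) = X.transpose ∘ K := by
      funext s; exact (hXT (K s)).symm
    rwa [he]
  have hcolKne : ∀ s, col (K s) ≠ 0 := fun s => hlicol.ne_zero s
  have hNrK : ∀ s, 0 < Nr (K s) := by
    intro s
    rcases (hNr0 (K s)).lt_or_eq with h | h
    · exact h
    · exact absurd (hcol0 _ h.symm) (hcolKne s)
  have hMncol : ∀ j p, Mn j p = col j p / Nr j := fun j p => hMn j p
  set θf : Fin n → Fin r → ℝ := fun j s => (Nr j)⁻¹ * (H s j * Nr (K s)) with hθfdef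
  have hθ0 : ∀ j s, 0 ≤ θf j s := fun j s =>
    mul_nonneg (inv_nonneg.mpr (hNr0 j)) (mul_nonneg (hH s j) (hNrK s).le)
  have hθsum : ∀ j, Nr j ≠ 0 → ∑ s, θf j s = 1 := by
    intro j hj
    show ∑ s, (Nr j)⁻¹ * (H s j * Nr (K s)) = 1
    rw [← Finset.mul_sum, ← hNradd j, inv_mul_cancel₀ hj]
  have hMncomb : ∀ j, Nr j ≠ 0 → ∀ p, Mn j p = ∑ s, θf j s * Mn (K s) p := by
    intro j hj p
    rw [hMncol, hcolfac j p, Finset.sum_div]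
    refine Finset.sum_congr rfl fun s _ => ?_
    rw [hMncol]
    show H s j * col (K s) p / Nr j = (Nr j)⁻¹ * (H s j * Nr (K s)) * (col (K s) p / Nr (K s))
    have h1 : Nr (K s) ≠ 0 := (hNrK s).ne'
    field_simp
  have hMn0 : ∀ j, Nr j = 0 → Mn j = 0 := by
    intro j hj; funext p
    show Mn j p = 0
    rw [hMncol, congrFun (hcol0 j hj) p, Pi.zero_apply, zero_div]
  have hLIbase : ∀ c : Fin r → ℝ, (∑ s, c s • Mn (K s)) = 0 → ∀ s, c s = 0 := by
    intro c hc s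
    have h2 : ∑ s, (c s * (Nr (K s))⁻¹) • col (K s) = 0 := by
      rw [← hc]
      refine Finset.sum_congr rfl fun s _ => funext fun p => ?_
      simp only [Pi.smul_apply, smul_eq_mul]
      rw [hMncol, div_eq_inv_mul]
      ring
    have h3 := Fintype.linearIndependent_iff.mp hlicol _ h2 s
    have hinv : (Nr (K s))⁻¹ ≠ 0 := inv_ne_zero (hNrK s).ne'
    exact (mul_eq_zero.mp h3).resolve_right hinv
  -- combination structure of residuals
  have hcomb : ∀ t : Fin (r+1), ∀ j, (Nr j = 0 → Z t j = 0) ∧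
      (Nr j ≠ 0 → ∀ p, Z t j p = ∑ s, θf j s * Z t (K s) p) := by
    intro t
    induction t using Fin.induction with
    | zero =>
      intro j
      rw [hZ0]
      exact ⟨hMn0 j, fun hj p => hMncomb j hj p⟩
    | succ t ih =>
      intro j
      constructor
      · intro hj
        have h0 := (ih j).1 hj
        funext a
        show Z t.succ j a = 0
        rw [hproj t j a, h0]
        simp
      · intro hj p
        have hj2 := (ih j).2 hj
        have hNdec : (∑ b, Z t.castSucc (k t) b * Z t.castSucc j b)
            = ∑ s, θf j s * (∑ b, Z t.castSucc (k t) b * Z t.castSucc (K s) b) := by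
          calc ∑ b, Z t.castSucc (k t) b * Z t.castSucc j b
              = ∑ b, ∑ s, θf j s * (Z t.castSucc (k t) b * Z t.castSucc (K s) b) := by
                refine Finset.sum_congr rfl fun b _ => ?_
                rw [hj2 b, Finset.mul_sum]
                exact Finset.sum_congr rfl fun s _ => by ring
            _ = _ := by
                rw [Finset.sum_comm]
                exact Finset.sum_congr rfl fun s _ => (Finset.mul_sum _ _ _).symm
        rw [hproj t j p, hNdec, hj2 p]
        rw [Finset.sum_div, Finset.sum_mul, ← Finset.sum_sub_distrib]
        refine Finset.sum_congr rfl fun s _ => ?_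
        rw [hproj t (K s) p]
        ring
  -- main induction on algorithm steps
  have main : ∀ t : ℕ, ∀ ht : t ≤ r, ∃ σ : Fin r → Fin r,
      (∀ s s' : Fin r, (s:ℕ) < t → (s':ℕ) < t → σ s = σ s' → s = s') ∧
      (∀ s : Fin r, (s:ℕ) < t → Mn (k s) = Mn (K (σ s))) ∧
      (∀ s : Fin r, (∃ s' : Fin r, (s':ℕ) < t ∧ σ s' = s) →
        Z ⟨t, Nat.lt_succ_of_le ht⟩ (K s) = 0) ∧
      LIon (fun s : Fin r => ∀ s' : Fin r, (s':ℕ) < t → σ s' ≠ s)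
        (fun s => Z ⟨t, Nat.lt_succ_of_le ht⟩ (K s)) := by
    intro t
    induction t with
    | zero =>
      intro ht
      refine ⟨id, fun s s' h => absurd h (Nat.not_lt_zero _),
        fun s h => absurd h (Nat.not_lt_zero _),
        fun s hex => absurd hex.choose_spec.1 (Nat.not_lt_zero _), ?_⟩
      intro c hc hsum s
      have hz : (⟨0, Nat.lt_succ_of_le ht⟩ : Fin (r+1)) = 0 := by
        ext; simp
      rw [hz, hZ0] at hsum
      exact hLIbase c hsum s
    | succ t ihs =>
      intro ht
      have ht' : t ≤ r := Nat.le_of_succ_le ht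
      obtain ⟨σ, hinj, hMnk, hzero, hLI⟩ := ihs ht'
      have htr : t < r := ht
      set st : Fin r := ⟨t, htr⟩ with hst
      have hcast : (⟨t, Nat.lt_succ_of_le ht'⟩ : Fin (r+1)) = st.castSucc := rfl
      have hsucc : (⟨t+1, Nat.lt_succ_of_le ht⟩ : Fin (r+1)) = st.succ := rfl
      rw [hcast] at hzero hLI
      set Q : Fin r → Prop := fun s => ∀ s' : Fin r, (s':ℕ) < t → σ s' ≠ s with hQdef
      set u : Fin 4 × Fin m → ℝ := Z st.castSucc (k st) with hudef
      set v : Fin r → (Fin 4 × Fin m → ℝ) := fun s => Z st.castSucc (K s) with hvdef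
      have hex : ∃ s1, Q s1 := by
        by_contra hno
        simp only [hQdef] at hno
        push_neg at hno
        choose g hg1 hg2 using hno
        have hginj : Function.Injective g := by
          intro a b hab
          rw [← hg2 a, ← hg2 b, hab]
        have hcard := Fintype.card_le_of_injective
          (fun s : Fin r => (⟨(g s : ℕ), hg1 s⟩ : Fin t))
          (fun a b hab => hginj (Fin.val_injective (by simpa using congrArg Fin.val hab)))
        simp only [Fintype.card_fin] at hcard
        omega
      obtain ⟨s1, hs1⟩ := hex
      have hvQ : ∀ s, ¬ Q s → v s = 0 := by
        intro s hs
        simp only [hQdef] at hs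
        push_neg at hs
        exact hzero s hs
      have hv1ne : v s1 ≠ 0 := by
        intro h0
        have := hLI (fun s' => if s' = s1 then 1 else 0)
          (fun s hs => by
            by_cases h : s = s1
            · exact absurd (h ▸ hs1) hs
            · simp [h])
          (by simp [h0]) s1
        simp at this
      have hune : u ≠ 0 := by
        intro h0
        have hm : ∑ a, v s1 a ^ 2 ≤ ∑ a, u a ^ 2 := hargmax st (K s1)
        rw [h0] at hm
        simp only [Pi.zero_apply, ne_eq, zero_pow, Finset.sum_const_zero,
          OfNat.ofNat_ne_zero, not_false_eq_true] at hm
        have h1 : ∑ a, v s1 a ^ 2 = 0 :=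
          le_antisymm hm (Finset.sum_nonneg fun a _ => sq_nonneg _)
        have hall : ∀ a, v s1 a = 0 := by
          intro a
          have h2 := (Finset.sum_eq_zero_iff_of_nonneg
            (fun a _ => sq_nonneg (v s1 a))).mp h1 a (Finset.mem_univ a)
          exact pow_eq_zero_iff two_ne_zero |>.mp h2
        exact hv1ne (funext hall)
      have hNrkt : Nr (k st) ≠ 0 := by
        intro h0
        apply hune
        rw [hudef]
        exact (hcomb st.castSucc (k st)).1 h0
      have hudec : ∀ a, u a = ∑ s, θf (k st) s * v s a :=
        fun a => (hcomb st.castSucc (k st)).2 hNrkt a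
      have hmax' : ∀ s, (∑ a, v s a ^ 2) ≤ ∑ a, u a ^ 2 := fun s => hargmax st (K s)
      obtain ⟨sstar, hQstar, hustar, hθstar⟩ :=
        aux_step' Q v hLI (θf (k st)) (fun s => hθ0 _ s) (hθsum _ hNrkt) hvQ u hudec hmax' hune
      have hothers : ∀ s, s ≠ sstar → θf (k st) s = 0 := by
        intro s hs
        have hsum1 := hθsum (k st) hNrkt
        have hsplit := Finset.add_sum_erase Finset.univ (θf (k st)) (Finset.mem_univ sstar)
        have hrest : ∑ s' ∈ Finset.univ.erase sstar, θf (k st) s' = 0 := by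
          rw [← hsplit, hθstar] at hsum1
          linarith
        exact (Finset.sum_eq_zero_iff_of_nonneg (fun s' _ => hθ0 (k st) s')).mp hrest s
          (Finset.mem_erase.mpr ⟨hs, Finset.mem_univ s⟩)
      have hMnkt : Mn (k st) = Mn (K sstar) := by
        funext p
        rw [hMncomb (k st) hNrkt p,
          Finset.sum_eq_single sstar (fun b _ hb => by rw [hothers b hb, zero_mul])
            (fun h => absurd (Finset.mem_univ _) h), hθstar, one_mul]
      have hdpos : 0 < ∑ b, Z st.castSucc (k st) b ^ 2 := by
        obtain ⟨b, hb⟩ := Function.ne_iff.mp hune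
        have h1 : u b ^ 2 ≤ ∑ b, u b ^ 2 :=
          Finset.single_le_sum (f := fun x => u x ^ 2) (fun b _ => sq_nonneg _)
            (Finset.mem_univ b)
        have h2 : 0 < u b ^ 2 := by rw [← sq_abs]; exact pow_pos (abs_pos.mpr hb) 2
        exact lt_of_lt_of_le h2 h1
      have hveq : Z st.castSucc (K sstar) = Z st.castSucc (k st) := by
        have h1 : Z st.castSucc (K sstar) = u := hustar.symm
        rw [h1, hudef]
      have hnew0 : Z st.succ (K sstar) = 0 := by
        funext a
        show Z st.succ (K sstar) a = 0
        rw [hproj st (K sstar) a]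
        have hdd : (∑ b, Z st.castSucc (k st) b * Z st.castSucc (K sstar) b)
            = ∑ b, Z st.castSucc (k st) b ^ 2 := by
          refine Finset.sum_congr rfl fun b _ => ?_
          rw [congrFun hveq b]; ring
        rw [hdd, div_self hdpos.ne', one_mul, congrFun hveq a, sub_self]
      have hold0 : ∀ s : Fin r, (∃ s' : Fin r, (s':ℕ) < t ∧ σ s' = s) →
          Z st.succ (K s) = 0 := by
        intro s hs
        have h0 : Z st.castSucc (K s) = 0 := hzero s hs
        funext a
        show Z st.succ (K s) a = 0
        rw [hproj st (K s) a, h0]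
        simp
      -- assemble the new data
      refine ⟨Function.update σ st sstar, ?_, ?_, ?_, ?_⟩
      · -- injectivity
        intro s s' hlt hlt' heq
        by_cases h1 : (s:ℕ) = t <;> by_cases h2 : (s':ℕ) = t
        · exact Fin.ext (h1.trans h2.symm)
        · exfalso
          have hs'lt : (s':ℕ) < t := by omega
          have hseq : s = st := Fin.ext h1
          rw [hseq, Function.update_self,
            Function.update_of_ne (fun hc => h2 (by rw [hc])) _ _] at heq
          exact hQstar s' hs'lt heq.symm
        · exfalso
          have hslt : (s:ℕ) < t := by omega
          have hseq : s' = st := Fin.ext h2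
          rw [hseq, Function.update_self,
            Function.update_of_ne (fun hc => h1 (by rw [hc])) _ _] at heq
          exact hQstar s hslt heq
        · have hslt : (s:ℕ) < t := by omega
          have hs'lt : (s':ℕ) < t := by omega
          rw [Function.update_of_ne (fun hc => h1 (by rw [hc])) _ _,
            Function.update_of_ne (fun hc => h2 (by rw [hc])) _ _] at heq
          exact hinj s s' hslt hs'lt heq
      · -- identified columns
        intro s hlt
        by_cases h1 : (s:ℕ) = t
        · have hseq : s = st := Fin.ext h1
          rw [hseq, Function.update_self]
          exact hMnkt
        · have hslt : (s:ℕ) < t := by omega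
          rw [Function.update_of_ne (fun hc => h1 (by rw [hc])) _ _]
          exact hMnk s hslt
      · -- vanishing residuals on chosen columns
        rintro s ⟨s', hlt, heq⟩
        show Z st.succ (K s) = 0
        by_cases h1 : (s':ℕ) = t
        · have hseq : s' = st := Fin.ext h1
          rw [hseq, Function.update_self] at heq
          rw [← heq]
          exact hnew0
        · have hs'lt : (s':ℕ) < t := by omega
          rw [Function.update_of_ne (fun hc => h1 (by rw [hc])) _ _] at heq
          exact hold0 s ⟨s', hs'lt, heq⟩
      · -- linear independence of the remaining residuals
        intro c hsupp hsum s
        have hQimp : ∀ s', ¬ Q s' →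
            ¬ (∀ s'' : Fin r, (s'':ℕ) < t + 1 → Function.update σ st sstar s'' ≠ s') := by
          intro s' hq hq'
          apply hq
          simp only [hQdef]
          intro s'' hlt heq
          refine hq' s'' (by omega) ?_
          rw [Function.update_of_ne (fun hc => absurd hlt (by rw [hc]; exact Nat.lt_irrefl t)) _ _]
          exact heq
        have hcstar : c sstar = 0 := by
          apply hsupp
          intro hc
          exact hc st (by simp [hst]) (Function.update_self _ _ _)
        have hsum' : ∑ s', c s' • Z st.succ (K s') = 0 := hsum
        set d : ℝ := ∑ b, Z st.castSucc (k st) b ^ 2 with hd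
        set Ns : Fin r → ℝ := fun s' => ∑ b, Z st.castSucc (k st) b * Z st.castSucc (K s') b
          with hNs
        set γ : ℝ := (∑ s', c s' * Ns s') / d with hγ
        have hpoint : ∀ a, (∑ s', c s' * v s' a) - γ * u a = 0 := by
          intro a
          have h1 := congrFun hsum' a
          rw [Finset.sum_apply] at h1
          have h2 : ∀ s' : Fin r, (c s' • Z st.succ (K s')) a
              = c s' * v s' a - c s' * Ns s' / d * u a := by
            intro s'
            rw [Pi.smul_apply, smul_eq_mul, hproj st (K s') a]
            have e1 : Z st.castSucc (K s') a = v s' a := rfl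
            have e2 : Z st.castSucc (k st) a = u a := rfl
            rw [e1, e2]
            have e3 : (∑ b, Z st.castSucc (k st) b * Z st.castSucc (K s') b) = Ns s' := rfl
            have e4 : (∑ b, Z st.castSucc (k st) b ^ 2) = d := rfl
            rw [e3, e4]
            ring
          rw [Finset.sum_congr rfl (fun s' _ => h2 s'), Finset.sum_sub_distrib] at h1
          have h3 : ∑ s', c s' * Ns s' / d * u a = γ * u a := by
            rw [← Finset.sum_mul, ← Finset.sum_div, ← hγ]
          rw [h3] at h1
          exact h1
        have hc'sum : ∑ s', (fun s'' => if s'' = sstar then -γ else c s'') s' • v s' = 0 := by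
          funext a
          show (∑ s', (fun s'' => if s'' = sstar then -γ else c s'') s' • v s') a = 0
          rw [Finset.sum_apply]
          have hsplit : ∀ s', (if s' = sstar then -γ else c s') * v s' a
              = c s' * v s' a - (if s' = sstar then γ else 0) * v s' a := by
            intro s'
            by_cases h : s' = sstar
            · subst h; simp [hcstar]
            · simp [h]
          calc ∑ s', ((fun s'' => if s'' = sstar then -γ else c s'') s' • v s') a
              = ∑ s', (if s' = sstar then -γ else c s') * v s' a :=
                Finset.sum_congr rfl fun s' _ => by rw [Pi.smul_apply, smul_eq_mul]
            _ = (∑ s', c s' * v s' a) - ∑ s', (if s' = sstar then γ else 0) * v s' a := by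
                rw [← Finset.sum_sub_distrib]
                exact Finset.sum_congr rfl fun s' _ => hsplit s'
            _ = (∑ s', c s' * v s' a) - γ * v sstar a := by
                congr 1
                simp only [ite_mul, zero_mul]
                rw [Finset.sum_ite_eq' Finset.univ sstar (fun s' => γ * v s' a)]
                simp
            _ = 0 := by
                have : v sstar a = u a := (congrFun hustar a).symm
                rw [this]
                exact hpoint a
        have hall := hLI (fun s'' => if s'' = sstar then -γ else c s'')
          (fun s' hq => by
            have hne : s' ≠ sstar := fun hc => hq (hc ▸ hQstar)
            simp only [hne, if_false]
            exact hsupp s' (hQimp s' hq))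
          hc'sum
        by_cases h : s = sstar
        · exact h ▸ hcstar
        · have := hall s
          simpa [h] using this
  -- conclusion
  obtain ⟨σ, hinj, hMnk, hzero, _⟩ := main r le_rfl
  have hinj' : Function.Injective σ := fun s s' h => hinj s s' s.isLt s'.isLt h
  have hbij : Function.Bijective σ := (Finite.injective_iff_bijective).mp hinj'
  have hzlast : ∀ s : Fin r, Z (Fin.last r) (K s) = 0 := by
    intro s
    obtain ⟨s', hs'⟩ := hbij.2 s
    exact hzero s ⟨s', s'.isLt, hs'⟩
  refine ⟨⟨σ, hbij, fun s => hMnk s s.isLt⟩, ?_⟩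
  funext j a
  show Z (Fin.last r) j a = 0
  by_cases hj : Nr j = 0
  · rw [(hcomb (Fin.last r) j).1 hj]
    rfl
  · rw [(hcomb (Fin.last r) j).2 hj a]
    refine Finset.sum_eq_zero fun s _ => ?_
    rw [congrFun (hzlast s) a]
    simp
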